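/- Let n ≥ 1, let X be a Hausdorff topological space, and let A ⊆ X be a retract of X, i.e. there exists a continuous map r : X → A with r(a) = a for all a ∈ A. Then every π_n-wild point of the subspace A (with its subspace topology) is a π_n-wild point of X; that is, w_n(A) ⊆ w_n(X). -/

import Mathlib

open Filter Topology

/-- The unit `n`-sphere in `ℝ^(n+1)`. -/
abbrev Sph (n : ℕ) : Type :=
  Metric.sphere (0 : EuclideanSpace ℝ (Fin (n + 1))) 1

/-- The basepoint `s₀ = (1,0,…,0)` of the unit `n`-sphere. -/
noncomputable def spherePt (n : ℕ) : Sph n :=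
  ⟨EuclideanSpace.single 0 1, by
    simp [mem_sphere_zero_iff_norm, EuclideanSpace.norm_single]⟩

/-- A continuous map `S^n → X` is essential if it is not homotopic to a constant map. -/
def Essential {n : ℕ} {X : Type*} [TopologicalSpace X] (f : C(Sph n, X)) : Prop :=
  ∀ x : X, ¬ f.Homotopic (ContinuousMap.const (Sph n) x)

/-- `x` is a `π_n`-wild point of `X` if there is a sequence of essential maps
`S^n → X` based at `x` converging to the constant map at `x` in the compact-open
topology. -/
def IsWildPoint (n : ℕ) {X : Type*} [TopologicalSpace X] (x : X) : Prop :=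
  ∃ f : ℕ → C(Sph n, X),
    (∀ k, f k (spherePt n) = x) ∧
    (∀ k, Essential (f k)) ∧
    Tendsto f atTop (𝓝 (ContinuousMap.const (Sph n) x))

/-- The `π_n`-wild set of `X`. -/
def wildSet (n : ℕ) (X : Type*) [TopologicalSpace X] : Set X :=
  {x | IsWildPoint n x}

/-- A continuous map is `π_n`-injective if precomposition reflects inessentiality. -/
def PiNInjective (n : ℕ) {X Y : Type*} [TopologicalSpace X] [TopologicalSpace Y]
    (f : C(X, Y)) : Prop :=
  ∀ g : C(Sph n, X),
    (∃ y : Y, (f.comp g).Homotopic (ContinuousMap.const (Sph n) y)) →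
    ∃ x : X, g.Homotopic (ContinuousMap.const (Sph n) x)

/-- `X` is `π_n`-rigid at `x`. -/
def IsRigidAt (n : ℕ) {X : Type*} [TopologicalSpace X] (x : X) : Prop :=
  ∃ f : ℕ → C(Sph n, X),
    (∀ k, f k (spherePt n) = x) ∧
    (∀ k, Essential (f k)) ∧
    Tendsto f atTop (𝓝 (ContinuousMap.const (Sph n) x)) ∧
    ∀ β : C(unitInterval, X), β 0 = x →
      ∀ H : ℕ → C(Sph n × unitInterval, X),
        (∀ k s, H k (s, 0) = f k s) →
        (∀ k t, H k (spherePt n, t) = β t) →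
        Tendsto H atTop (𝓝 (β.comp (ContinuousMap.snd (α := Sph n)))) →
        β 1 = x

/-- wild points of a retract are wild points of the ambient space. -/
theorem stmt3 {X : Type*} [TopologicalSpace X] [T2Space X] (n : ℕ) (hn : 1 ≤ n)
    (A : Set X) (r : C(X, ↥A)) (hr : ∀ a : A, r (a : X) = a) :
    ∀ a : A, IsWildPoint n a → IsWildPoint n (a : X) := by
  rintro a ⟨f, hbase, hess, htend⟩
  set ι : C(↥A, X) := ⟨Subtype.val, continuous_subtype_val⟩ with hι
  refine ⟨fun k => ι.comp (f k), fun k => by simp [ι, hbase k], ?_, ?_⟩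
  · intro k x hx
    have h2 := ContinuousMap.Homotopic.comp (ContinuousMap.Homotopic.refl r) hx
    have he : r.comp (ι.comp (f k)) = f k := by
      ext s; exact congrArg Subtype.val (hr (f k s))
    rw [he] at h2
    exact hess k (r x) (by simpa using h2)
  · have : Continuous (fun g : C(Sph n, ↥A) => ι.comp g) := ι.continuous_postcomp
    have := (this.tendsto _).comp htend
    exact this
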